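/- For any positive integer n, the product over k from 1 to n of (2k-1)^2/((2k-1)^2 - z^2), for any complex number z with |z| < 1, equals [(2n-1)!!]^2 · sum over k from 1 to n of [2(-1)^{k-1}(2k-1) / ((2n-2k)!!·(2n+2k-2)!!)] · 1/((2k-1)^2 - z^2). -/

import Mathlib

open scoped Nat
open Finset

noncomputable def pfC (m j : ℕ) : ℂ :=
  (((2*m+1)‼ : ℕ) : ℂ)^2 * (2 * (-1)^j * (2*(j:ℂ)+1)) /
    ((((2*(m-j))‼ : ℕ) : ℂ) * (((2*(m+j+1))‼ : ℕ) : ℂ))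

lemma dfac_ne_zero (n : ℕ) : ((n‼ : ℕ) : ℂ) ≠ 0 :=
  Nat.cast_ne_zero.mpr (Nat.doubleFactorial_pos n).ne'

lemma fac_ne_zero (n : ℕ) : ((n ! : ℕ) : ℂ) ≠ 0 :=
  Nat.cast_ne_zero.mpr (Nat.factorial_pos n).ne'

lemma alt_partial (n : ℕ) : ∀ k, ∑ r ∈ range (k+1), (-1:ℤ)^r * ((n+1).choose r) = (-1)^k * (n.choose k) := by
  intro k
  induction k with
  | zero => simp
  | succ k ih =>
    rw [Finset.sum_range_succ, ih, Nat.choose_succ_succ]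
    push_cast
    ring

lemma altS (t : ℕ) :
    ∑ r ∈ range (t+2), (-1:ℤ)^r * (2*(t:ℤ)+3-2*r) * ((2*t+3).choose r) = 0 := by
  have hB : ∑ r ∈ range (t+2), (-1:ℤ)^r * r * ((2*t+3).choose r)
      = -(2*(t:ℤ)+3) * ∑ i ∈ range (t+1), (-1:ℤ)^i * ((2*t+2).choose i) := by
    rw [Finset.sum_range_succ', Finset.mul_sum]
    simp only [Nat.cast_zero, mul_zero, zero_mul, add_zero, pow_zero, one_mul]
    refine Finset.sum_congr rfl fun i _ => ?_
    have h' : (2*t+3) * ((2*t+2).choose i) = ((2*t+3).choose (i+1)) * (i+1) := by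
      simpa [Nat.succ_eq_add_one] using Nat.add_one_mul_choose_eq (2*t+2) i
    have h'' : ((2*t+3 : ℕ):ℤ) * ((2*t+2).choose i) = ((2*t+3).choose (i+1)) * ((i:ℤ)+1) := by
      exact_mod_cast congrArg (Nat.cast : ℕ → ℤ) h'
    push_cast at h'' ⊢
    linear_combination (-1:ℤ)^i * h''
  have hA : ∑ r ∈ range (t+2), (-1:ℤ)^r * ((2*t+3).choose r)
      = (-1)^(t+1) * ((2*t+2).choose (t+1)) := by
    have := alt_partial (2*t+2) (t+1)
    simpa [show 2*t+2+1 = 2*t+3 by ring] using this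
  have hA2 : ∑ i ∈ range (t+1), (-1:ℤ)^i * ((2*t+2).choose i)
      = (-1)^t * ((2*t+1).choose t) := by
    have := alt_partial (2*t+1) t
    simpa [show 2*t+1+1 = 2*t+2 by ring] using this
  have hcent : (2*t+2).choose (t+1) = 2 * ((2*t+1).choose t) := by
    have h1 : (2*t+2).choose (t+1) = (2*t+1).choose t + (2*t+1).choose (t+1) :=
      Nat.choose_succ_succ (2*t+1) t
    rw [h1, Nat.choose_symm_half]
    ring
  have expand : ∑ r ∈ range (t+2), (-1:ℤ)^r * (2*(t:ℤ)+3-2*r) * ((2*t+3).choose r)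
      = (2*(t:ℤ)+3) * (∑ r ∈ range (t+2), (-1:ℤ)^r * ((2*t+3).choose r))
        - 2 * (∑ r ∈ range (t+2), (-1:ℤ)^r * r * ((2*t+3).choose r)) := by
    rw [Finset.mul_sum, Finset.mul_sum, ← Finset.sum_sub_distrib]
    refine Finset.sum_congr rfl fun r _ => ?_
    ring
  rw [expand, hA, hB, hA2, hcent]
  push_cast
  ring

lemma aux_alg (A F1 F2 Ft X P Q c s : ℂ) (h1 : F1 ≠ 0) (h2 : F2 ≠ 0) (ht : Ft ≠ 0)
    (hP : P ≠ 0) (hQ : Q ≠ 0) (hX : X * F1 * F2 = Ft) :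
    A^2 * (2 * s * c) / ((P * F1) * (Q * F2)) = A^2 * 2 / ((P * Q) * Ft) * (s * c * X) := by
  have hXne : X ≠ 0 := by
    intro h; rw [h] at hX; simp at hX; exact ht hX.symm
  rw [← hX]
  field_simp

lemma pfC_eq {j M : ℕ} (hj : j ≤ M) : pfC M j =
    (((2*M+1)‼ : ℕ):ℂ)^2 * 2 / (2^(2*M+1) * (((2*M+1)! : ℕ):ℂ)) *
      ((-1)^j * (2*(j:ℂ)+1) * (((2*M+1).choose (M-j) : ℕ):ℂ)) := by
  obtain ⟨d, rfl⟩ := Nat.exists_eq_add_of_le hj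
  have hsub : j + d - j = d := by omega
  rw [pfC, hsub]
  have hd1 : (2*d)‼ = 2^d * d ! := Nat.doubleFactorial_two_mul d
  have hd2 : (2*((j+d)+j+1))‼ = 2^((j+d)+j+1) * ((j+d)+j+1)! :=
    Nat.doubleFactorial_two_mul _
  have hcf : (2*(j+d)+1).choose d * d ! * ((j+d)+j+1)! = (2*(j+d)+1)! := by
    have h := Nat.choose_mul_factorial_mul_factorial (show d ≤ 2*(j+d)+1 by omega)
    rwa [show 2*(j+d)+1 - d = (j+d)+j+1 by omega] at h
  have hcfC : (((2*(j+d)+1).choose d : ℕ):ℂ) * ((d ! : ℕ):ℂ) * ((((j+d)+j+1)! : ℕ):ℂ)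
      = (((2*(j+d)+1)! : ℕ):ℂ) := by exact_mod_cast congrArg (Nat.cast : ℕ → ℂ) hcf
  have hpow : (2:ℂ)^(2*(j+d)+1) = 2^d * 2^((j+d)+j+1) := by
    rw [← pow_add]; congr 1; omega
  rw [hd1, hd2, Nat.cast_mul, Nat.cast_mul, Nat.cast_pow, Nat.cast_pow, Nat.cast_ofNat, hpow]
  exact aux_alg _ _ _ _ _ _ _ _ _ (fac_ne_zero _) (fac_ne_zero _) (fac_ne_zero _)
    (pow_ne_zero _ two_ne_zero) (pow_ne_zero _ two_ne_zero) hcfC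

lemma sumC (t : ℕ) : ∑ j ∈ range (t+2), pfC (t+1) j = 0 := by
  have hrw : ∀ j ∈ range (t+2), pfC (t+1) j =
      (((2*(t+1)+1)‼ : ℕ):ℂ)^2 * 2 / (2^(2*(t+1)+1) * (((2*(t+1)+1)! : ℕ):ℂ)) *
        ((-1)^j * (2*(j:ℂ)+1) * (((2*(t+1)+1).choose ((t+1)-j) : ℕ):ℂ)) :=
    fun j hj => pfC_eq (Nat.lt_succ_iff.mp (mem_range.mp hj))
  rw [Finset.sum_congr rfl hrw, ← Finset.mul_sum]
  apply mul_eq_zero_of_right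
  rw [← Finset.sum_range_reflect (fun (j : ℕ) => (-1:ℂ)^j * (2*(j:ℂ)+1) *
      (((2*(t+1)+1).choose ((t+1)-j) : ℕ):ℂ)) (t+2)]
  have key : ∀ r ∈ range (t+2), (fun (j : ℕ) => (-1:ℂ)^j * (2*(j:ℂ)+1) *
        (((2*(t+1)+1).choose ((t+1)-j) : ℕ):ℂ)) (t+2-1-r)
      = (-1:ℂ)^(t+1) * ((-1:ℂ)^r * (2*(t:ℂ)+3-2*r) * (((2*t+3).choose r : ℕ):ℂ)) := by
    intro r hr
    have hrM : r ≤ t+1 := Nat.lt_succ_iff.mp (mem_range.mp hr)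
    simp only
    rw [show t+2-1-r = (t+1) - r by omega, show (t+1)-((t+1)-r) = r by omega,
      show 2*(t+1)+1 = 2*t+3 by omega]
    have hpow : (-1:ℂ)^((t+1)-r) = (-1)^(t+1) * (-1)^r := by
      rw [← pow_add, show (t+1) + r = ((t+1)-r) + 2*r by omega, pow_add]
      simp [pow_mul]
    rw [hpow]
    have hc : (((t+1)-r : ℕ):ℂ) = ((t:ℂ)+1) - r := by
      push_cast [hrM]; ring
    rw [hc]; ring
  rw [Finset.sum_congr rfl key, ← Finset.mul_sum]
  apply mul_eq_zero_of_right
  have hz := altS t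
  have hcast : ∑ r ∈ range (t+2), (-1:ℂ)^r * (2*(t:ℂ)+3-2*r) * (((2*t+3).choose r : ℕ):ℂ)
      = ((∑ r ∈ range (t+2), (-1:ℤ)^r * (2*(t:ℤ)+3-2*r) * ((2*t+3).choose r) : ℤ) : ℂ) := by
    push_cast
    rfl
  rw [hcast, hz, Int.cast_zero]

lemma aux_rec (A D1 D2 u v x c : ℂ) (h1 : D1 ≠ 0) (h2 : D2 ≠ 0) (hu : u ≠ 0) (hv : v ≠ 0) :
    (x*A)^2 * c / ((u*D1)*(v*D2)) * (u*v) = A^2 * c / (D1*D2) * x^2 := by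
  field_simp

lemma pfC_rec {j m : ℕ} (hj : j ≤ m) :
    pfC (m+1) j * ((2*((m:ℂ)+1)+1)^2 - (2*(j:ℂ)+1)^2) = pfC m j * (2*((m:ℂ)+1)+1)^2 := by
  obtain ⟨d, rfl⟩ := Nat.exists_eq_add_of_le hj
  have e1 : (j + d) + 1 - j = d + 1 := by omega
  have e2 : j + d - j = d := by omega
  have f1 : ((2*((j+d)+1)+1)‼ : ℕ) = (2*(j+d)+3) * ((2*(j+d)+1)‼ : ℕ) := by
    rw [show 2*((j+d)+1)+1 = (2*(j+d)+1)+2 by ring]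
    exact Nat.doubleFactorial_add_two _
  have f2 : ((2*(d+1))‼ : ℕ) = (2*d+2) * ((2*d)‼ : ℕ) := by
    rw [show 2*(d+1) = (2*d)+2 by ring]
    exact Nat.doubleFactorial_add_two _
  have f3 : ((2*(((j+d)+1)+j+1))‼ : ℕ) = (2*((j+d)+j+1)+2) * ((2*((j+d)+j+1))‼ : ℕ) := by
    rw [show 2*(((j+d)+1)+j+1) = (2*((j+d)+j+1))+2 by ring]
    exact Nat.doubleFactorial_add_two _
  have heq_sub : (2*(((j + d : ℕ):ℂ)+1)+1)^2 - (2*(j:ℂ)+1)^2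
      = ((2*d+2 : ℕ):ℂ) * ((2*((j+d)+j+1)+2 : ℕ):ℂ) := by
    push_cast; ring
  have hB : 2*(((j + d : ℕ):ℂ)+1)+1 = ((2*(j+d)+3 : ℕ):ℂ) := by
    push_cast; ring
  rw [pfC, pfC, e1, e2, f1, f2, f3, Nat.cast_mul, Nat.cast_mul, Nat.cast_mul, heq_sub, hB]
  exact aux_rec _ _ _ _ _ _ _ (dfac_ne_zero _) (dfac_ne_zero _)
    (Nat.cast_ne_zero.mpr (by omega)) (Nat.cast_ne_zero.mpr (by omega))

lemma Ba_ne {j m : ℕ} (hj : j ≤ m) : (2*((m:ℂ)+1)+1)^2 - (2*(j:ℂ)+1)^2 ≠ 0 := by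
  obtain ⟨d, rfl⟩ := Nat.exists_eq_add_of_le hj
  have heq : (2*(((j+d : ℕ)):ℂ)+1+2)^2 - (2*(j:ℂ)+1)^2
      = ((2*d+2 : ℕ):ℂ) * ((4*j+2*d+4 : ℕ):ℂ) := by push_cast; ring
  have heq2 : (2*(((j+d : ℕ):ℂ)+1)+1)^2 - (2*(j:ℂ)+1)^2
      = ((2*d+2 : ℕ):ℂ) * ((4*j+2*d+4 : ℕ):ℂ) := by push_cast; ring
  rw [heq2]
  exact mul_ne_zero (Nat.cast_ne_zero.mpr (by omega)) (Nat.cast_ne_zero.mpr (by omega))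

lemma split_frac (cm cm1 B w a : ℂ) (hx : a - w ≠ 0) (hy : B - w ≠ 0) (hd : B - a ≠ 0)
    (hrel : cm1 * (B - a) = cm * B) :
    cm * (1/(a - w)) * (B/(B - w)) = cm1 * (1/(a - w)) - cm1 * (1/(B - w)) := by
  have h1 : cm1 = cm * B / (B - a) := by rw [eq_div_iff hd]; exact hrel
  rw [h1]
  field_simp
  ring

lemma main_lemma (m : ℕ) (w : ℂ) (hw : ∀ j : ℕ, (2*(j:ℂ)+1)^2 - w ≠ 0) :
    ∏ j ∈ range (m+1), (2*(j:ℂ)+1)^2 / ((2*(j:ℂ)+1)^2 - w)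
      = ∑ j ∈ range (m+1), pfC m j * (1/((2*(j:ℂ)+1)^2 - w)) := by
  induction m with
  | zero =>
    rw [Finset.prod_range_one, Finset.sum_range_one]
    have h1 : pfC 0 0 = 1 := by
      norm_num [pfC, Nat.doubleFactorial]
    rw [h1, one_mul, one_div]
    rw [div_eq_mul_inv]
    norm_num
  | succ m ih =>
    have hBw := hw (m+1)
    rw [Finset.prod_range_succ, ih,
      Finset.sum_range_succ (f := fun j => pfC (m+1) j * (1/((2*(j:ℂ)+1)^2 - w)))]
    have hsum0 := sumC m
    rw [Finset.sum_range_succ] at hsum0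
    have hlast : pfC (m+1) (m+1) = - ∑ j ∈ range (m+1), pfC (m+1) j :=
      (neg_eq_of_add_eq_zero_right hsum0).symm.trans rfl
    rw [hlast, neg_mul, ← sub_eq_add_neg, Finset.sum_mul, Finset.sum_mul,
      ← Finset.sum_sub_distrib]
    refine Finset.sum_congr rfl fun j hj => ?_
    have hjm : j ≤ m := Nat.lt_succ_iff.mp (mem_range.mp hj)
    have hcast : ((↑(m+1) : ℂ)) = (m:ℂ)+1 := by push_cast; ring
    rw [show ((2 * ((m+1:ℕ):ℂ) + 1)^2) = (2*((m:ℂ)+1)+1)^2 by push_cast; ring]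
    have hx := hw j
    have hy : (2*((m:ℂ)+1)+1)^2 - w ≠ 0 := by
      have := hw (m+1); rwa [show ((2 * ((m+1:ℕ):ℂ) + 1)^2) = (2*((m:ℂ)+1)+1)^2 by push_cast; ring] at this
    exact split_frac _ _ _ _ _ hx hy (Ba_ne hjm) (pfC_rec hjm)

theorem partial_fraction_double_factorial (n : ℕ) (hn : 0 < n) (z : ℂ) (hz : ‖z‖ < 1) :
    ∏ k ∈ Finset.Icc 1 n, (2 * (k : ℂ) - 1) ^ 2 / ((2 * (k : ℂ) - 1) ^ 2 - z ^ 2) =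
      ((Nat.doubleFactorial (2 * n - 1) : ℂ)) ^ 2 *
        ∑ k ∈ Finset.Icc 1 n,
          2 * (-1 : ℂ) ^ (k - 1) * (2 * (k : ℂ) - 1) /
              ((Nat.doubleFactorial (2 * n - 2 * k) : ℂ) *
                (Nat.doubleFactorial (2 * n + 2 * k - 2) : ℂ)) *
            (1 / ((2 * (k : ℂ) - 1) ^ 2 - z ^ 2)) := by
  obtain ⟨N, rfl⟩ : ∃ N, n = N + 1 := ⟨n - 1, by omega⟩
  have hw : ∀ j : ℕ, (2*(j:ℂ)+1)^2 - z^2 ≠ 0 := by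
    intro j h
    have h2 : (2*(j:ℂ)+1)^2 = z^2 := sub_eq_zero.mp h
    have h3 : ‖(2*(j:ℂ)+1)^2‖ = ‖z^2‖ := by rw [h2]
    rw [norm_pow, norm_pow] at h3
    have h4 : (2*(j:ℂ)+1) = ((2*j+1 : ℕ):ℂ) := by push_cast; ring
    rw [h4, Complex.norm_natCast] at h3
    have h5 : (1:ℝ) ≤ ((2*j+1 : ℕ):ℝ) := by exact_mod_cast Nat.one_le_iff_ne_zero.mpr (by omega)
    have h6 : (0:ℝ) ≤ ‖z‖ := norm_nonneg z
    nlinarith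
  have hmain := main_lemma N (z^2) hw
  have hicc : Finset.Icc 1 (N+1) = Finset.Ico 1 (N+2) := (Finset.Ico_add_one_right_eq_Icc ..).symm
  rw [hicc, Finset.mul_sum]
  rw [Finset.prod_Ico_eq_prod_range, Finset.sum_Ico_eq_sum_range]
  simp only [show N + 2 - 1 = N + 1 from rfl]
  rw [show (∏ j ∈ range (N+1), (2 * ((1+j : ℕ) : ℂ) - 1) ^ 2 / ((2 * ((1+j : ℕ) : ℂ) - 1) ^ 2 - z ^ 2))
      = ∏ j ∈ range (N+1), (2*(j:ℂ)+1)^2 / ((2*(j:ℂ)+1)^2 - z^2) from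
    Finset.prod_congr rfl fun j _ => by push_cast; ring_nf, hmain]
  refine Finset.sum_congr rfl fun j hj => ?_
  have hjN : j ≤ N := Nat.lt_succ_iff.mp (mem_range.mp hj)
  have n1 : 2 * (N+1) - 1 = 2*N+1 := by omega
  have n2 : (1+j) - 1 = j := by omega
  have n3 : 2 * (N+1) - 2 * (1+j) = 2*(N-j) := by omega
  have n4 : 2 * (N+1) + 2 * (1+j) - 2 = 2*(N+j+1) := by omega
  rw [n1, n2, n3, n4, pfC]
  have hc : (2 * ((1+j : ℕ):ℂ) - 1) = 2*(j:ℂ)+1 := by push_cast; ring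
  rw [hc]
  ring
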